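/- Let G, A, B, S be groups and i : S → A, j : S → B group homomorphisms. For a homomorphism ρ from any group into G, let Stab(ρ) denote the subgroup {g ∈ G | ∀x, g·ρ(x)·g⁻¹ = ρ(x)} (the centralizer of the image of ρ). Fix homomorphisms ρ_A : A → G and ρ_B : B → G with ρ_A ∘ i = ρ_B ∘ j =: ρ_S, and note Stab(ρ_A) and Stab(ρ_B) are subgroups of Stab(ρ_S). Let F be the set of pairs (ρ_A', ρ_B') of homomorphisms ρ_A' : A → G, ρ_B' : B → G with ρ_A' ∘ i = ρ_B' ∘ j, such that ρ_A' is conjugate to ρ_A (i.e., ρ_A' = g ρ_A g⁻¹ pointwise for some g ∈ G) and ρ_B' is conjugate to ρ_B, and let G act on F by simultaneous conjugation. Then the orbit set F/G is in bijection with the double coset space Stab(ρ_A) \ Stab(ρ_S) / Stab(ρ_B). -/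

import Mathlib

/-- The fiber of the character variety of an amalgamated free product over a pair of
conjugacy classes: let `i : S → A`, `j : S → B` be group homomorphisms, `ρ_A : A → G`,
`ρ_B : B → G` homomorphisms agreeing on `S` (via `i`, `j`), with restriction `ρ_S`.
Writing `Stab(ρ)` for the centralizer of the image of `ρ`, the set of pairs
`(ρ_A', ρ_B')`, agreeing on `S`, with `ρ_A'` conjugate to `ρ_A` and `ρ_B'` conjugate to
`ρ_B`, modulo simultaneous conjugation by `G`, is in bijection with the double coset
space `Stab(ρ_A) \ Stab(ρ_S) / Stab(ρ_B)`. -/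
theorem fiber_equiv_double_coset
    {G A B S : Type*} [Group G] [Group A] [Group B] [Group S]
    (i : S →* A) (j : S →* B) (ρA : A →* G) (ρB : B →* G)
    (hcompat : ρA.comp i = ρB.comp j)
    -- the stabilizers (centralizers of the images)
    (StabA StabB StabS : Subgroup G)
    (hStabA : StabA = Subgroup.centralizer (Set.range ρA))
    (hStabB : StabB = Subgroup.centralizer (Set.range ρB))
    (hStabS : StabS = Subgroup.centralizer (Set.range (ρA.comp i)))
    -- the set `F` of pairs agreeing on `S`, conjugate to `(ρA, ρB)` factorwise
    (F : Set ((A →* G) × (B →* G)))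
    (hF : F = {ρ' : (A →* G) × (B →* G) |
      ρ'.1.comp i = ρ'.2.comp j ∧
      (∃ g : G, ∀ a : A, ρ'.1 a = g * ρA a * g⁻¹) ∧
      (∃ g : G, ∀ b : B, ρ'.2 b = g * ρB b * g⁻¹)})
    -- the simultaneous-conjugation relation on `F`
    (r : F → F → Prop)
    (hr : r = fun x y => ∃ g : G,
      (∀ a : A, y.val.1 a = g * x.val.1 a * g⁻¹) ∧
      (∀ b : B, y.val.2 b = g * x.val.2 b * g⁻¹)) :
    Nonempty (Quot r ≃
      DoubleCoset.Quotient
        (Subtype.val ⁻¹' (StabA : Set G) : Set StabS)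
        (Subtype.val ⁻¹' (StabB : Set G) : Set StabS)) := by
  classical
  subst hF hr
  -- replace the sets by coercions of subgroups
  set HA : Subgroup StabS := StabA.comap StabS.subtype with hHA
  set HB : Subgroup StabS := StabB.comap StabS.subtype with hHB
  have hsetA : (Subtype.val ⁻¹' (StabA : Set G) : Set StabS) = (HA : Set StabS) := by
    ext x; simp [hHA, Subgroup.mem_comap, Subgroup.mem_subgroupOf]
  have hsetB : (Subtype.val ⁻¹' (StabB : Set G) : Set StabS) = (HB : Set StabS) := by
    ext x; simp [hHB, Subgroup.mem_comap, Subgroup.mem_subgroupOf]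
  rw [hsetA, hsetB]
  -- basic conjugation lemma
  have conj_eq : ∀ (g a a' : G), a * g * a⁻¹ = a' * g * a'⁻¹ →
      g * (a⁻¹ * a') = a⁻¹ * a' * g := by
    intro g a a' h
    calc g * (a⁻¹ * a') = a⁻¹ * (a * g * a⁻¹) * a' := by group
      _ = a⁻¹ * (a' * g * a'⁻¹) * a' := by rw [h]
      _ = a⁻¹ * a' * g := by group
  -- membership lemmas
  have memA : ∀ (f : A →* G) (a a' : G), (∀ t, f t = a * ρA t * a⁻¹) →
      (∀ t, f t = a' * ρA t * a'⁻¹) → a⁻¹ * a' ∈ StabA := by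
    intro f a a' ha ha'
    rw [hStabA, Subgroup.mem_centralizer_iff]
    rintro _ ⟨t, rfl⟩
    exact conj_eq _ _ _ ((ha t).symm.trans (ha' t))
  have memB : ∀ (f : B →* G) (b b' : G), (∀ t, f t = b * ρB t * b⁻¹) →
      (∀ t, f t = b' * ρB t * b'⁻¹) → b⁻¹ * b' ∈ StabB := by
    intro f b b' hb hb'
    rw [hStabB, Subgroup.mem_centralizer_iff]
    rintro _ ⟨t, rfl⟩
    exact conj_eq _ _ _ ((hb t).symm.trans (hb' t))
  have memS : ∀ (f : A →* G) (f' : B →* G) (a b : G), f.comp i = f'.comp j →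
      (∀ t, f t = a * ρA t * a⁻¹) → (∀ t, f' t = b * ρB t * b⁻¹) →
      a⁻¹ * b ∈ StabS := by
    intro f f' a b hc ha hb
    rw [hStabS, Subgroup.mem_centralizer_iff]
    rintro _ ⟨s, rfl⟩
    apply conj_eq
    have h1 : f (i s) = f' (j s) := DFunLike.congr_fun hc s
    have h2 : ρB (j s) = ρA (i s) := (DFunLike.congr_fun hcompat s).symm
    have h3 := (ha (i s)).symm.trans (h1.trans (hb (j s)))
    rw [h2] at h3
    simpa using h3
  -- the ambient F (as a set literal, after subst)
  set Fs : Set ((A →* G) × (B →* G)) := {ρ' : (A →* G) × (B →* G) |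
      ρ'.1.comp i = ρ'.2.comp j ∧
      (∃ g : G, ∀ a : A, ρ'.1 a = g * ρA a * g⁻¹) ∧
      (∃ g : G, ∀ b : B, ρ'.2 b = g * ρB b * g⁻¹)} with hFs
  -- witnesses
  have hwit : ∀ x : Fs, ∃ a b : G, (∀ t, x.val.1 t = a * ρA t * a⁻¹) ∧
      (∀ t, x.val.2 t = b * ρB t * b⁻¹) := by
    intro x
    obtain ⟨hc, ⟨a, ha⟩, ⟨b, hb⟩⟩ := x.2
    exact ⟨a, b, ha, hb⟩
  -- the map on F
  have toMem : ∀ x : Fs, ((hwit x).choose)⁻¹ * (hwit x).choose_spec.choose ∈ StabS := by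
    intro x
    exact memS _ _ _ _ x.2.1 (hwit x).choose_spec.choose_spec.1
      (hwit x).choose_spec.choose_spec.2
  set toFun0 : Fs → DoubleCoset.Quotient (HA : Set StabS) (HB : Set StabS) :=
    fun x => DoubleCoset.mk HA HB ⟨_, toMem x⟩ with htoFun0
  -- key independence lemma
  have key2 : ∀ (x : Fs) (a b : G) (ha : ∀ t, x.val.1 t = a * ρA t * a⁻¹)
      (hb : ∀ t, x.val.2 t = b * ρB t * b⁻¹) (m : a⁻¹ * b ∈ StabS),
      toFun0 x = DoubleCoset.mk HA HB ⟨a⁻¹ * b, m⟩ := by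
    intro x a b ha hb m
    rw [htoFun0]
    obtain ⟨ha0, hb0⟩ := (hwit x).choose_spec.choose_spec
    set a0 := (hwit x).choose
    set b0 := (hwit x).choose_spec.choose
    rw [DoubleCoset.eq]
    have hAmem : a⁻¹ * a0 ∈ StabA := memA _ _ _ ha ha0
    have hBmem : b0⁻¹ * b ∈ StabB := memB _ _ _ hb0 hb
    have hAS : a⁻¹ * a0 ∈ StabS := by
      rw [hStabS, Subgroup.mem_centralizer_iff]
      rintro _ ⟨s, rfl⟩
      rw [hStabA, Subgroup.mem_centralizer_iff] at hAmem
      exact hAmem _ ⟨i s, rfl⟩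
    have hBS : b0⁻¹ * b ∈ StabS := by
      rw [hStabS, Subgroup.mem_centralizer_iff]
      rintro _ ⟨s, rfl⟩
      rw [hStabB, Subgroup.mem_centralizer_iff] at hBmem
      have h2 : ρB (j s) = ρA (i s) := (DFunLike.congr_fun hcompat s).symm
      have := hBmem _ ⟨j s, rfl⟩
      rw [h2] at this
      simpa using this
    refine ⟨⟨a⁻¹ * a0, hAS⟩, ?_, ⟨b0⁻¹ * b, hBS⟩, ?_, ?_⟩
    · simp [hHA, Subgroup.mem_comap, Subgroup.mem_subgroupOf, hAmem]
    · simp [hHB, Subgroup.mem_comap, Subgroup.mem_subgroupOf, hBmem]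
    · apply Subtype.ext
      show (a⁻¹ * b : G) = (a⁻¹ * a0) * (a0⁻¹ * b0) * (b0⁻¹ * b)
      group
  -- the relation
  set r : Fs → Fs → Prop := fun x y => ∃ g : G,
      (∀ a : A, y.val.1 a = g * x.val.1 a * g⁻¹) ∧
      (∀ b : B, y.val.2 b = g * x.val.2 b * g⁻¹) with hrr
  -- the forward map
  have hlift : ∀ x y : Fs, r x y → toFun0 x = toFun0 y := by
    intro x y ⟨g, hg1, hg2⟩
    obtain ⟨a, b, ha, hb⟩ := hwit x
    have hya : ∀ t, y.val.1 t = (g * a) * ρA t * (g * a)⁻¹ := by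
      intro t; rw [hg1 t, ha t]; group
    have hyb : ∀ t, y.val.2 t = (g * b) * ρB t * (g * b)⁻¹ := by
      intro t; rw [hg2 t, hb t]; group
    have m : a⁻¹ * b ∈ StabS := memS _ _ _ _ x.2.1 ha hb
    have m' : (g * a)⁻¹ * (g * b) ∈ StabS := by
      have : (g * a)⁻¹ * (g * b) = a⁻¹ * b := by group
      rw [this]; exact m
    rw [key2 x a b ha hb m, key2 y (g * a) (g * b) hya hyb m']
    congr 1
    apply Subtype.ext
    show (a⁻¹ * b : G) = (g * a)⁻¹ * (g * b)
    group
  have pairMem : ∀ s : StabS, ((ρA, ((MulAut.conj (s : G)).toMonoidHom.comp ρB)) :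
      (A →* G) × (B →* G)) ∈ Fs := by
    intro s
    refine ⟨?_, ⟨1, by simp⟩, ⟨(s : G), fun b => by simp⟩⟩
    ext s'
    have h2 : ρB (j s') = ρA (i s') := (DFunLike.congr_fun hcompat s').symm
    have centS : ∀ g : G, g ∈ StabS → ∀ x ∈ Set.range ⇑(ρA.comp i), x * g = g * x := by
      intro g hg
      rw [hStabS] at hg
      exact Subgroup.mem_centralizer_iff.mp hg
    have := centS (s : G) s.2 _ ⟨s', rfl⟩
    simp only [MonoidHom.comp_apply] at this ⊢
    simp only [MulEquiv.coe_toMonoidHom, MulAut.conj_apply, h2]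
    rw [← this]
    group
  set invFun0 : StabS → Quot r := fun s => Quot.mk r ⟨_, pairMem s⟩ with hinvFun0
  have hinvlift : ∀ s s' : StabS, (DoubleCoset.setoid (HA : Set StabS) (HB : Set StabS)) s s' →
      invFun0 s = invFun0 s' := by
    intro s s' hrel
    rw [DoubleCoset.rel_iff] at hrel
    obtain ⟨h, hh, k, hk, rfl⟩ := hrel
    rw [Subgroup.mem_comap] at hh hk
    simp only [Subgroup.coe_subtype] at hh hk
    apply Quot.sound
    refine ⟨(h : G), fun a => ?_, fun b => ?_⟩
    · show ρA a = (h : G) * ρA a * (h : G)⁻¹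
      rw [hStabA, Subgroup.mem_centralizer_iff] at hh
      have := hh _ ⟨a, rfl⟩
      rw [← this]; group
    · show ((h * s * k : StabS) : G) * ρB b * ((h * s * k : StabS) : G)⁻¹
        = (h : G) * ((s : G) * ρB b * (s : G)⁻¹) * (h : G)⁻¹
      rw [hStabB, Subgroup.mem_centralizer_iff] at hk
      have hkb := hk _ ⟨b, rfl⟩
      push_cast
      calc (h : G) * s * k * ρB b * ((h : G) * s * k)⁻¹
          = (h : G) * s * (k * ρB b) * ((h : G) * s * k)⁻¹ := by group
        _ = (h : G) * s * (ρB b * k) * ((h : G) * s * k)⁻¹ := by rw [hkb]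
        _ = (h : G) * ((s : G) * ρB b * (s : G)⁻¹) * (h : G)⁻¹ := by group
  refine ⟨⟨Quot.lift toFun0 hlift, Quotient.lift invFun0 hinvlift, ?_, ?_⟩⟩
  · -- left inverse
    intro q
    induction q using Quot.ind with
    | _ x =>
      obtain ⟨a, b, ha, hb⟩ := hwit x
      have m : a⁻¹ * b ∈ StabS := memS _ _ _ _ x.2.1 ha hb
      show Quotient.lift invFun0 hinvlift (toFun0 x) = Quot.mk r x
      rw [key2 x a b ha hb m]
      show invFun0 ⟨a⁻¹ * b, m⟩ = Quot.mk r x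
      apply Quot.sound
      refine ⟨a, fun t => ?_, fun t => ?_⟩
      · show x.val.1 t = a * ρA t * a⁻¹
        exact ha t
      · show x.val.2 t = a * ((a⁻¹ * b) * ρB t * (a⁻¹ * b)⁻¹) * a⁻¹
        rw [hb t]; group
  · -- right inverse
    intro q
    induction q using Quotient.inductionOn' with
    | _ s =>
      show Quot.lift toFun0 hlift (invFun0 s) = Quotient.mk'' s
      show toFun0 ⟨_, pairMem s⟩ = Quotient.mk'' s
      have ha : ∀ t, ((⟨_, pairMem s⟩ : Fs)).val.1 t = 1 * ρA t * 1⁻¹ := by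
        intro t; simp
      have hb : ∀ t, ((⟨_, pairMem s⟩ : Fs)).val.2 t = (s : G) * ρB t * (s : G)⁻¹ := by
        intro t; simp
      have m : (1 : G)⁻¹ * (s : G) ∈ StabS := by simp only [inv_one, one_mul]; exact s.2
      rw [key2 _ 1 (s : G) ha hb m]
      have hss : (⟨(1 : G)⁻¹ * (s : G), m⟩ : StabS) = s := Subtype.ext (by simp)
      rw [hss]
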